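/- Let h : Q → P be a homomorphism of commutative monoids with P finitely generated. If h is dense (for every p ∈ P there exists an integer n > 0 with n • p in the image of h), then P is a finitely generated Q-module via h: there is a finite subset S ⊆ P such that every p ∈ P can be written as p = h(q) + s with q ∈ Q and s ∈ S. -/

import Mathlib

theorem aux_closure_covered
    (Q P : Type*) [AddCommMonoid Q] [AddCommMonoid P]
    (h : Q →+ P)
    (hdense : ∀ p : P, ∃ n : ℕ, 0 < n ∧ n • p ∈ Set.range h) :
    ∀ T : Finset P, ∃ S : Finset P,
      ∀ p ∈ AddSubmonoid.closure (↑T : Set P), ∃ q : Q, ∃ s ∈ S, p = h q + s := by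
  intro T
  classical
  induction T using Finset.induction_on with
  | empty =>
    refine ⟨{0}, fun p hp => ⟨0, 0, Finset.mem_singleton_self 0, ?_⟩⟩
    simp only [Finset.coe_empty, AddSubmonoid.closure_empty, AddSubmonoid.mem_bot] at hp
    simp [hp]
  | @insert g T hg ih =>
    obtain ⟨S, hS⟩ := ih
    obtain ⟨n, hn, q₀, hq₀⟩ := hdense g
    refine ⟨(S ×ˢ Finset.range n).image (fun x => x.1 + x.2 • g), fun p hp => ?_⟩
    rw [Finset.coe_insert, Set.insert_eq, AddSubmonoid.closure_union] at hp
    rw [AddSubmonoid.mem_sup] at hp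
    obtain ⟨y, hy, z, hz, rfl⟩ := hp
    rw [AddSubmonoid.mem_closure_singleton] at hy
    obtain ⟨m, rfl⟩ := hy
    obtain ⟨q, s, hs, rfl⟩ := hS z hz
    refine ⟨(m / n) • q₀ + q, s + (m % n) • g, ?_, ?_⟩
    · exact Finset.mem_image.mpr ⟨(s, m % n),
        Finset.mem_product.mpr ⟨hs, Finset.mem_range.mpr (Nat.mod_lt _ hn)⟩, rfl⟩
    · have : m • g = (m / n) • (n • g) + (m % n) • g := by
        rw [← mul_nsmul', ← add_nsmul, Nat.div_add_mod']
      rw [this, ← hq₀, map_add, map_nsmul]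
      abel

theorem finitely_generated_module_of_dense
    (Q P : Type*) [AddCommMonoid Q] [AddCommMonoid P]
    (hP : AddMonoid.FG P) (h : Q →+ P)
    (hdense : ∀ p : P, ∃ n : ℕ, 0 < n ∧ n • p ∈ Set.range h) :
    ∃ S : Finset P, ∀ p : P, ∃ q : Q, ∃ s ∈ S, p = h q + s := by
  obtain ⟨T, hT⟩ := hP.fg_top
  obtain ⟨S, hS⟩ := aux_closure_covered Q P h hdense T
  exact ⟨S, fun p => hS p (hT ▸ AddSubmonoid.mem_top p)⟩
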